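/- In the setting of the abstract Hodge theory proposition (densely defined closed operators T: H₁ → H₂, S: H₂ → H₃ with ST = 0, and closed ranges Im(S), Im(T)), the kernel of Δ = S*S + TT* equals Ker(T*) ∩ Ker(S), and the orthogonal complement of Ker(Δ) in H₂ equals the image of Δ. -/

import Mathlib

open scoped InnerProductSpace

/-- kernel of a partial linear map as a submodule of the ambient space -/
private lemma pker_mem {E F : Type*} [NormedAddCommGroup E] [InnerProductSpace ℂ E]
    [NormedAddCommGroup F] [InnerProductSpace ℂ F] (A : E →ₗ.[ℂ] F) (x : E) :
    x ∈ (LinearMap.ker A.toFun).map A.domain.subtype ↔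
      ∃ hx : x ∈ A.domain, A ⟨x, hx⟩ = 0 := by
  simp only [Submodule.mem_map, LinearMap.mem_ker]
  constructor
  · rintro ⟨⟨y, hy⟩, h1, rfl⟩; exact ⟨hy, h1⟩
  · rintro ⟨hx, h⟩; exact ⟨⟨x, hx⟩, h, rfl⟩

private lemma pker_closed {E F : Type*} [NormedAddCommGroup E] [InnerProductSpace ℂ E]
    [NormedAddCommGroup F] [InnerProductSpace ℂ F] (A : E →ₗ.[ℂ] F) (hA : A.IsClosed) :
    IsClosed (((LinearMap.ker A.toFun).map A.domain.subtype : Submodule ℂ E) : Set E) := by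
  have h : (((LinearMap.ker A.toFun).map A.domain.subtype : Submodule ℂ E) : Set E)
      = (fun y => (y, (0 : F))) ⁻¹' (A.graph : Set (E × F)) := by
    ext y
    simp only [Set.mem_preimage, SetLike.mem_coe, LinearPMap.mem_graph_iff, pker_mem]
    constructor
    · rintro ⟨hy, h0⟩; exact ⟨⟨y, hy⟩, rfl, h0⟩
    · rintro ⟨u, rfl, h0⟩; exact ⟨u.2, h0⟩
  rw [h]
  exact hA.preimage (continuous_id.prodMk continuous_const)

/-- if `x ⊥ range A` then `x ∈ dom A†` and `A† x = 0`. -/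
private lemma adj_zero {E F : Type*} [NormedAddCommGroup E] [InnerProductSpace ℂ E]
    [NormedAddCommGroup F] [InnerProductSpace ℂ F] [CompleteSpace E]
    (A : E →ₗ.[ℂ] F) (hAdense : Dense (A.domain : Set E)) (x : F)
    (hx : ∀ u : A.domain, (inner ℂ x (A u) : ℂ) = 0) :
    ∃ h : x ∈ A.adjoint.domain, A.adjoint ⟨x, h⟩ = 0 := by
  have hm : x ∈ A.adjoint.domain :=
    LinearPMap.mem_adjoint_domain_of_exists x ⟨0, fun u => by simp [hx u]⟩
  exact ⟨hm, LinearPMap.adjoint_apply_eq hAdense ⟨x, hm⟩ (fun u => by simp [hx u])⟩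

/-- Key surjectivity lemma: if `A` is closed, densely defined, with closed range, and
`x ⊥ ker A`, then `x = A† w` for some `w` in the range of `A`. -/
private lemma hodge_key {E F : Type*} [NormedAddCommGroup E] [InnerProductSpace ℂ E]
    [CompleteSpace E] [NormedAddCommGroup F] [InnerProductSpace ℂ F] [CompleteSpace F]
    (A : E →ₗ.[ℂ] F) (hAdense : Dense (A.domain : Set E)) (hAclosed : A.IsClosed)
    (hArange : IsClosed (Set.range fun u : A.domain => A u))
    (x : E) (hx : ∀ u : A.domain, A u = 0 → (inner ℂ x (u : E) : ℂ) = 0) :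
    ∃ (w : F) (hw : w ∈ A.adjoint.domain), (∃ u : A.domain, A u = w) ∧
      A.adjoint ⟨w, hw⟩ = x := by
  set R : Submodule ℂ F := LinearMap.range A.toFun with hR
  have hRset : (R : Set F) = Set.range fun u : A.domain => A u := rfl
  have hRclosed : IsClosed (R : Set F) := hRset ▸ hArange
  haveI : CompleteSpace R := hRclosed.completeSpace_coe
  haveI : CompleteSpace A.graph := hAclosed.completeSpace_coe
  have hmem : ∀ g : A.graph, ((LinearMap.snd ℂ E F).comp A.graph.subtype) g ∈ R := by
    intro g
    obtain ⟨u, _, hu2⟩ := A.mem_graph_iff.1 g.2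
    exact ⟨u, hu2⟩
  let f : A.graph →L[ℂ] R :=
    { toLinearMap := LinearMap.codRestrict R ((LinearMap.snd ℂ E F).comp A.graph.subtype) hmem
      cont := Continuous.subtype_mk (continuous_snd.comp continuous_subtype_val) _ }
  have fsurj : Function.Surjective f := by
    rintro ⟨v, u, hu⟩
    exact ⟨⟨(↑u, A u), A.mem_graph u⟩, Subtype.ext hu⟩
  obtain ⟨C, hC0, hC⟩ := ContinuousLinearMap.exists_preimage_norm_le f fsurj
  have sol : ∀ v : R, ∃ u : A.domain, A u = (v : F) ∧ ‖(u : E)‖ ≤ C * ‖v‖ := by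
    intro v
    obtain ⟨g, hg1, hg2⟩ := hC v
    obtain ⟨u, hu1, hu2⟩ := A.mem_graph_iff.1 g.2
    refine ⟨u, ?_, ?_⟩
    · rw [hu2]; exact congrArg Subtype.val hg1
    · calc ‖(u : E)‖ = ‖((g : E × F)).1‖ := by rw [hu1]
        _ ≤ ‖(g : E × F)‖ := norm_fst_le _
        _ ≤ C * ‖v‖ := hg2
  choose U hU1 hU2 using sol
  have hwd : ∀ u u' : A.domain, A u = A u' →
      (inner ℂ x ((u : E)) : ℂ) = inner ℂ x ((u' : E)) := by
    intro u u' h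
    have h0 : (inner ℂ x (((u - u' : A.domain) : E)) : ℂ) = 0 :=
      hx _ (by rw [LinearPMap.map_sub, h, sub_self])
    rw [AddSubgroupClass.coe_sub, inner_sub_right, sub_eq_zero] at h0
    exact h0
  let φl : R →ₗ[ℂ] ℂ :=
    { toFun := fun v => (inner ℂ x ((U v : E)) : ℂ)
      map_add' := fun v v' => by
        have h : (inner ℂ x ((U (v + v') : E)) : ℂ) = inner ℂ x (((U v + U v' : A.domain) : E)) :=
          hwd _ _ (by rw [LinearPMap.map_add, hU1, hU1, hU1, Submodule.coe_add])
        simp only [h, Submodule.coe_add, inner_add_right]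
      map_smul' := fun c v => by
        have h : (inner ℂ x ((U (c • v) : E)) : ℂ) = inner ℂ x (((c • U v : A.domain) : E)) :=
          hwd _ _ (by rw [LinearPMap.map_smul, hU1, hU1, Submodule.coe_smul])
        simp only [h, Submodule.coe_smul, inner_smul_right, RingHom.id_apply, smul_eq_mul] }
  have hφb : ∀ v : R, ‖φl v‖ ≤ (‖x‖ * C) * ‖v‖ := by
    intro v
    calc ‖φl v‖ ≤ ‖x‖ * ‖(U v : E)‖ := norm_inner_le_norm _ _
      _ ≤ ‖x‖ * (C * ‖v‖) := by
          apply mul_le_mul_of_nonneg_left (hU2 v) (norm_nonneg x)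
      _ = (‖x‖ * C) * ‖v‖ := by ring
  let φ : R →L[ℂ] ℂ := φl.mkContinuous _ hφb
  let w0 : R := (InnerProductSpace.toDual ℂ R).symm φ
  have hw0 : ∀ v : R, (inner ℂ w0 v : ℂ) = φ v := fun v => InnerProductSpace.toDual_symm_apply
  have hkey : ∀ u : A.domain, (inner ℂ x ((u : E)) : ℂ) = inner ℂ (w0 : F) (A u) := by
    intro u
    have hAu : A u ∈ R := ⟨u, rfl⟩
    have h1 : (inner ℂ ((w0 : F)) (A u) : ℂ) = inner ℂ w0 (⟨A u, hAu⟩ : R) := rfl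
    rw [h1, hw0]
    have h2 : φ (⟨A u, hAu⟩ : R) = inner ℂ x ((U ⟨A u, hAu⟩ : E)) := rfl
    rw [h2]
    exact hwd u _ (by rw [hU1])
  have hwmem : (w0 : F) ∈ A.adjoint.domain :=
    LinearPMap.mem_adjoint_domain_of_exists _ ⟨x, fun u => hkey u⟩
  refine ⟨w0, hwmem, w0.2, ?_⟩
  exact LinearPMap.adjoint_apply_eq hAdense _ (fun u => hkey u)

/-- Abstract Hodge theory: `Ker Δ = Ker T* ∩ Ker S` and `(Ker Δ)ᗮ = Im Δ`. -/
theorem stmt_5 {H₁ H₂ H₃ : Type*}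
    [NormedAddCommGroup H₁] [InnerProductSpace ℂ H₁] [CompleteSpace H₁]
    [NormedAddCommGroup H₂] [InnerProductSpace ℂ H₂] [CompleteSpace H₂]
    [NormedAddCommGroup H₃] [InnerProductSpace ℂ H₃] [CompleteSpace H₃]
    (T : H₁ →ₗ.[ℂ] H₂) (S : H₂ →ₗ.[ℂ] H₃)
    (hTdense : Dense (T.domain : Set H₁)) (hSdense : Dense (S.domain : Set H₂))
    (hTclosed : T.IsClosed) (hSclosed : S.IsClosed)
    (hImT : ∀ x : T.domain, T x ∈ S.domain)
    (hST : ∀ x : T.domain, S ⟨T x, hImT x⟩ = 0)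
    (hSrange : IsClosed (Set.range fun x : S.domain => S x))
    (hTrange : IsClosed (Set.range fun x : T.domain => T x))
    (Δ : H₂ →ₗ.[ℂ] H₂)
    (hΔdom : ∀ x : H₂, x ∈ Δ.domain ↔
      ∃ (h1 : x ∈ S.domain) (h2 : x ∈ T.adjoint.domain),
        T.adjoint ⟨x, h2⟩ ∈ T.domain ∧ S ⟨x, h1⟩ ∈ S.adjoint.domain)
    (hΔ : ∀ (x : H₂) (hx : x ∈ Δ.domain) (h1 : x ∈ S.domain) (h2 : x ∈ T.adjoint.domain)
        (h3 : T.adjoint ⟨x, h2⟩ ∈ T.domain) (h4 : S ⟨x, h1⟩ ∈ S.adjoint.domain),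
        Δ ⟨x, hx⟩ = S.adjoint ⟨S ⟨x, h1⟩, h4⟩ + T ⟨T.adjoint ⟨x, h2⟩, h3⟩) :
    (∀ x : H₂, (∃ hx : x ∈ Δ.domain, Δ ⟨x, hx⟩ = 0) ↔
      ((∃ h : x ∈ T.adjoint.domain, T.adjoint ⟨x, h⟩ = 0) ∧
        (∃ h : x ∈ S.domain, S ⟨x, h⟩ = 0))) ∧
    (∀ x : H₂,
      (∀ (y : H₂) (hy : y ∈ Δ.domain), Δ ⟨y, hy⟩ = 0 → (inner ℂ x y : ℂ) = 0) ↔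
        x ∈ Set.range fun p : Δ.domain => Δ p) := by
  have fS := LinearPMap.adjoint_isFormalAdjoint hSdense
  have fT := LinearPMap.adjoint_isFormalAdjoint hTdense
  set KS : Submodule ℂ H₂ := (LinearMap.ker S.toFun).map S.domain.subtype with hKSdef
  set KT : Submodule ℂ H₁ := (LinearMap.ker T.toFun).map T.domain.subtype with hKTdef
  set MT : Submodule ℂ H₂ := LinearMap.range T.toFun with hMTdef
  haveI : CompleteSpace KS := (pker_closed S hSclosed).completeSpace_coe
  haveI : CompleteSpace KT := (pker_closed T hTclosed).completeSpace_coe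
  have hMTclosed : IsClosed (MT : Set H₂) := hTrange
  haveI : CompleteSpace MT := hMTclosed.completeSpace_coe
  have hMT_le_KS : MT ≤ KS := by
    rintro z ⟨v, rfl⟩
    exact (pker_mem S _).2 ⟨hImT v, hST v⟩
  -- harmonic elements lie in the kernel of Δ
  have mkKer : ∀ z : H₂, (∃ h : z ∈ T.adjoint.domain, T.adjoint ⟨z, h⟩ = 0) →
      (∃ h : z ∈ S.domain, S ⟨z, h⟩ = 0) → ∃ hz : z ∈ Δ.domain, Δ ⟨z, hz⟩ = 0 := by
    rintro z ⟨h2, hT0⟩ ⟨h1, hS0⟩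
    have h3 : T.adjoint ⟨z, h2⟩ ∈ T.domain := by rw [hT0]; exact T.domain.zero_mem
    have h4 : S ⟨z, h1⟩ ∈ S.adjoint.domain := by rw [hS0]; exact S.adjoint.domain.zero_mem
    have hz : z ∈ Δ.domain := (hΔdom z).2 ⟨h1, h2, h3, h4⟩
    refine ⟨hz, ?_⟩
    rw [hΔ z hz h1 h2 h3 h4]
    have e1 : (⟨S ⟨z, h1⟩, h4⟩ : S.adjoint.domain) = 0 := Subtype.ext hS0
    have e2 : (⟨T.adjoint ⟨z, h2⟩, h3⟩ : T.domain) = 0 := Subtype.ext hT0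
    rw [e1, e2, LinearPMap.map_zero, LinearPMap.map_zero, add_zero]
  -- Part 1
  have part1 : ∀ x : H₂, (∃ hx : x ∈ Δ.domain, Δ ⟨x, hx⟩ = 0) ↔
      ((∃ h : x ∈ T.adjoint.domain, T.adjoint ⟨x, h⟩ = 0) ∧
        (∃ h : x ∈ S.domain, S ⟨x, h⟩ = 0)) := by
    intro x
    constructor
    · rintro ⟨hx, hΔ0⟩
      obtain ⟨h1, h2, h3, h4⟩ := (hΔdom x).1 hx
      have heq := hΔ x hx h1 h2 h3 h4
      rw [hΔ0] at heq
      have h5 : (inner ℂ (S.adjoint ⟨S ⟨x, h1⟩, h4⟩ + T ⟨T.adjoint ⟨x, h2⟩, h3⟩) x : ℂ) = 0 := by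
        rw [← heq, inner_zero_left]
      rw [inner_add_left] at h5
      have hA : (inner ℂ (S.adjoint ⟨S ⟨x, h1⟩, h4⟩) x : ℂ)
          = inner ℂ (S ⟨x, h1⟩) (S ⟨x, h1⟩) := fS ⟨S ⟨x, h1⟩, h4⟩ ⟨x, h1⟩
      have hB : (inner ℂ (T.adjoint ⟨x, h2⟩) (T.adjoint ⟨x, h2⟩) : ℂ)
          = inner ℂ x (T ⟨T.adjoint ⟨x, h2⟩, h3⟩) := fT ⟨x, h2⟩ ⟨T.adjoint ⟨x, h2⟩, h3⟩
      have hB' : (inner ℂ (T ⟨T.adjoint ⟨x, h2⟩, h3⟩) x : ℂ)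
          = inner ℂ (T.adjoint ⟨x, h2⟩) (T.adjoint ⟨x, h2⟩) := by
        rw [← inner_conj_symm, ← hB, inner_conj_symm]
      rw [hA, hB', inner_self_eq_norm_sq_to_K, inner_self_eq_norm_sq_to_K] at h5
      have hre : (‖S ⟨x, h1⟩‖ ^ 2 + ‖T.adjoint ⟨x, h2⟩‖ ^ 2 : ℝ) = 0 := by
        have h6 : ((‖S ⟨x, h1⟩‖ ^ 2 + ‖T.adjoint ⟨x, h2⟩‖ ^ 2 : ℝ) : ℂ) = 0 := by
          push_cast; exact h5
        exact_mod_cast h6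
      have hS0 : ‖S ⟨x, h1⟩‖ ^ 2 = 0 := by nlinarith [sq_nonneg ‖S ⟨x, h1⟩‖, sq_nonneg ‖T.adjoint ⟨x, h2⟩‖]
      have hT0 : ‖T.adjoint ⟨x, h2⟩‖ ^ 2 = 0 := by nlinarith [sq_nonneg ‖S ⟨x, h1⟩‖, sq_nonneg ‖T.adjoint ⟨x, h2⟩‖]
      exact ⟨⟨h2, by simpa using (pow_eq_zero_iff (two_ne_zero)).1 hT0⟩,
        ⟨h1, by simpa using (pow_eq_zero_iff (two_ne_zero)).1 hS0⟩⟩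
    · rintro ⟨hT', hS'⟩
      exact mkKer x hT' hS'
  -- claim A : elements of the range of T are in the range of Δ
  have claimA : ∀ x₁ : H₂, x₁ ∈ MT → ∃ p : Δ.domain, Δ p = x₁ := by
    rintro x₁ ⟨u, hu⟩
    obtain ⟨hk1, hk2⟩ := (pker_mem T _).1 (Submodule.orthogonalProjection KT (u : H₁)).2
    set u₁ : T.domain := u - ⟨((Submodule.orthogonalProjection KT (u : H₁) : H₁)), hk1⟩ with hu₁def
    have hu₁T : T u₁ = x₁ := by
      rw [hu₁def, LinearPMap.map_sub, hk2, sub_zero]; exact hu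
    have hcoe : ((u₁ : H₁)) = (u : H₁) - (Submodule.orthogonalProjection KT (u : H₁) : H₁) := by
      rw [hu₁def]; rfl
    have hu₁perp : ((u₁ : H₁)) ∈ KTᗮ := by
      rw [hcoe]; exact Submodule.sub_starProjection_mem_orthogonal (K := KT) (u : H₁)
    have hperp : ∀ v : T.domain, T v = 0 → (inner ℂ ((u₁ : H₁)) ((v : H₁)) : ℂ) = 0 := by
      intro v hv
      exact (Submodule.mem_orthogonal' KT _).1 hu₁perp _ ((pker_mem T _).2 ⟨v.2, hv⟩)
    obtain ⟨w, hw, ⟨v₀, hv₀⟩, hadj⟩ := hodge_key T hTdense hTclosed hTrange ((u₁ : H₁)) hperp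
    have h1 : w ∈ S.domain := hv₀ ▸ hImT v₀
    have hS0 : S ⟨w, h1⟩ = 0 := by
      have e : (⟨w, h1⟩ : S.domain) = ⟨T v₀, hImT v₀⟩ := Subtype.ext hv₀.symm
      rw [e]; exact hST v₀
    have h3 : T.adjoint ⟨w, hw⟩ ∈ T.domain := by rw [hadj]; exact u₁.2
    have h4 : S ⟨w, h1⟩ ∈ S.adjoint.domain := by rw [hS0]; exact S.adjoint.domain.zero_mem
    have hwΔ : w ∈ Δ.domain := (hΔdom w).2 ⟨h1, hw, h3, h4⟩
    refine ⟨⟨w, hwΔ⟩, ?_⟩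
    show Δ ⟨w, hwΔ⟩ = x₁
    rw [hΔ w hwΔ h1 hw h3 h4]
    have e1 : (⟨S ⟨w, h1⟩, h4⟩ : S.adjoint.domain) = 0 := Subtype.ext hS0
    have e2 : (⟨T.adjoint ⟨w, hw⟩, h3⟩ : T.domain) = u₁ := Subtype.ext hadj
    rw [e1, e2, LinearPMap.map_zero, hu₁T, zero_add]
  -- claim B : elements of (ker S)ᗮ are in the range of Δ
  have claimB : ∀ x₂ : H₂, x₂ ∈ KSᗮ → ∃ p : Δ.domain, Δ p = x₂ := by
    intro x₂ hx₂
    have hperp : ∀ v : S.domain, S v = 0 → (inner ℂ x₂ ((v : H₂)) : ℂ) = 0 := fun v hv =>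
      (Submodule.mem_orthogonal' KS x₂).1 hx₂ _ ((pker_mem S _).2 ⟨v.2, hv⟩)
    obtain ⟨w, hw, ⟨u, hu⟩, hadj⟩ := hodge_key S hSdense hSclosed hSrange x₂ hperp
    obtain ⟨hk1, hk2⟩ := (pker_mem S _).1 (Submodule.orthogonalProjection KS (u : H₂)).2
    set w' : S.domain := u - ⟨((Submodule.orthogonalProjection KS (u : H₂) : H₂)), hk1⟩ with hw'def
    have hSw' : S w' = w := by
      rw [hw'def, LinearPMap.map_sub, hk2, sub_zero]; exact hu
    have hcoe : ((w' : H₂)) = (u : H₂) - (Submodule.orthogonalProjection KS (u : H₂) : H₂) := by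
      rw [hw'def]; rfl
    have hw'perp : ((w' : H₂)) ∈ KSᗮ := by
      rw [hcoe]; exact Submodule.sub_starProjection_mem_orthogonal (K := KS) (u : H₂)
    have hTperp : ∀ v : T.domain, (inner ℂ ((w' : H₂)) (T v) : ℂ) = 0 := by
      intro v
      exact (Submodule.mem_orthogonal' KS _).1 hw'perp _ (hMT_le_KS ⟨v, rfl⟩)
    obtain ⟨hT2, hT0⟩ := adj_zero T hTdense ((w' : H₂)) hTperp
    have h1 : (w' : H₂) ∈ S.domain := w'.2
    have h3 : T.adjoint ⟨(w' : H₂), hT2⟩ ∈ T.domain := by rw [hT0]; exact T.domain.zero_mem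
    have h4 : S ⟨(w' : H₂), h1⟩ ∈ S.adjoint.domain := by
      have e : (⟨(w' : H₂), h1⟩ : S.domain) = w' := Subtype.ext rfl
      rw [e, hSw']; exact hw
    have hwΔ : (w' : H₂) ∈ Δ.domain := (hΔdom _).2 ⟨h1, hT2, h3, h4⟩
    refine ⟨⟨(w' : H₂), hwΔ⟩, ?_⟩
    show Δ ⟨(w' : H₂), hwΔ⟩ = x₂
    rw [hΔ _ hwΔ h1 hT2 h3 h4]
    have e1 : (⟨S ⟨(w' : H₂), h1⟩, h4⟩ : S.adjoint.domain) = ⟨w, hw⟩ := by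
      apply Subtype.ext
      show S ⟨(w' : H₂), h1⟩ = w
      have e : (⟨(w' : H₂), h1⟩ : S.domain) = w' := Subtype.ext rfl
      rw [e, hSw']
    have e2 : (⟨T.adjoint ⟨(w' : H₂), hT2⟩, h3⟩ : T.domain) = 0 := Subtype.ext hT0
    rw [e1, e2, LinearPMap.map_zero, hadj, add_zero]
  refine ⟨part1, ?_⟩
  intro x
  constructor
  · intro hperp
    have hx₂ : x - (Submodule.orthogonalProjection KS x : H₂) ∈ KSᗮ :=
      Submodule.sub_starProjection_mem_orthogonal x
    set xK := ((Submodule.orthogonalProjection KS x : H₂)) with hxKdef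
    set x₁ := ((Submodule.orthogonalProjection MT xK : H₂)) with hx₁def
    have hx₀M : xK - x₁ ∈ MTᗮ := Submodule.sub_starProjection_mem_orthogonal xK
    have hxKKS : xK ∈ KS := (Submodule.orthogonalProjection KS x).2
    have hx₁MT : x₁ ∈ MT := (Submodule.orthogonalProjection MT xK).2
    have hx₁KS : x₁ ∈ KS := hMT_le_KS hx₁MT
    have hx₀KS : xK - x₁ ∈ KS := sub_mem hxKKS hx₁KS
    obtain ⟨hS1, hS2⟩ := (pker_mem S _).1 hx₀KS
    have hT0 := adj_zero T hTdense (xK - x₁)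
      (fun v => (Submodule.mem_orthogonal' MT _).1 hx₀M _ ⟨v, rfl⟩)
    obtain ⟨hz, hz0⟩ := mkKer (xK - x₁) hT0 ⟨hS1, hS2⟩
    have h0 : (inner ℂ x (xK - x₁) : ℂ) = 0 := hperp _ hz hz0
    have hx0 : xK - x₁ = 0 := by
      have h1 : (inner ℂ x₁ (xK - x₁) : ℂ) = 0 :=
        (Submodule.mem_orthogonal MT _).1 hx₀M x₁ hx₁MT
      have h2 : (inner ℂ (x - xK) (xK - x₁) : ℂ) = 0 :=
        (Submodule.mem_orthogonal' KS _).1 hx₂ _ hx₀KS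
      have h3 : x = x₁ + (xK - x₁) + (x - xK) := by abel
      rw [← inner_self_eq_zero (𝕜 := ℂ) (x := xK - x₁)]
      rw [h3, inner_add_left, inner_add_left, h1, h2, zero_add, add_zero] at h0
      exact h0
    obtain ⟨pA, hpA⟩ := claimA x₁ hx₁MT
    obtain ⟨pB, hpB⟩ := claimB (x - xK) hx₂
    refine ⟨pA + pB, ?_⟩
    show Δ (pA + pB) = x
    rw [LinearPMap.map_add, hpA, hpB]
    have hxk : xK = x₁ := by rwa [sub_eq_zero] at hx0
    rw [← hxk]; abel
  · rintro ⟨p, rfl⟩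
    intro y hy hy0
    obtain ⟨hyT, hyS⟩ := (part1 y).1 ⟨hy, hy0⟩
    obtain ⟨hy1, hy2⟩ := hyS
    obtain ⟨hy3, hy4⟩ := hyT
    obtain ⟨h1, h2, h3, h4⟩ := (hΔdom p).1 p.2
    have hp : Δ p = S.adjoint ⟨S ⟨(p : H₂), h1⟩, h4⟩ + T ⟨T.adjoint ⟨(p : H₂), h2⟩, h3⟩ :=
      hΔ (p : H₂) p.2 h1 h2 h3 h4
    show (inner ℂ (Δ p) y : ℂ) = 0
    rw [hp, inner_add_left]
    have hA : (inner ℂ (S.adjoint ⟨S ⟨(p : H₂), h1⟩, h4⟩) y : ℂ)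
        = inner ℂ (S ⟨(p : H₂), h1⟩) (S ⟨y, hy1⟩) := fS ⟨S ⟨(p : H₂), h1⟩, h4⟩ ⟨y, hy1⟩
    have hB : (inner ℂ (T.adjoint ⟨y, hy3⟩) (T.adjoint ⟨(p : H₂), h2⟩) : ℂ)
        = inner ℂ y (T ⟨T.adjoint ⟨(p : H₂), h2⟩, h3⟩) := fT ⟨y, hy3⟩ ⟨T.adjoint ⟨(p : H₂), h2⟩, h3⟩
    have hB' : (inner ℂ (T ⟨T.adjoint ⟨(p : H₂), h2⟩, h3⟩) y : ℂ) = 0 := by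
      rw [← inner_conj_symm, ← hB, hy4, inner_zero_left, map_zero]
    rw [hA, hB', hy2, inner_zero_right, add_zero]
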